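/- Let X ∈ ℝ^{n×N} with N ≥ n and let Σ be an n×n symmetric positive semidefinite matrix such that the operator norm ‖X Xᵀ − Σ‖ ≤ ε₀²/4 for some ε₀ ≥ 0. Then there exists a matrix J ∈ ℝ^{n×N} with J Jᵀ = Σ and ‖J − X‖ ≤ ε₀ (operator norm). -/

import Mathlib

open Matrix

/-- The spectral (ℓ₂ operator) norm of a real matrix. -/
noncomputable def specNorm {m n : ℕ} (A : Matrix (Fin m) (Fin n) ℝ) : ℝ :=
  ‖(Matrix.toEuclideanLin A).toContinuousLinearMap‖

open scoped RealInnerProductSpace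

variable {m n k : ℕ}

lemma rTrans (A : Matrix (Fin m) (Fin n) ℝ) : Aᴴ = Aᵀ :=
  Matrix.conjTranspose_eq_transpose_of_trivial A

lemma toE_transpose (A : Matrix (Fin m) (Fin n) ℝ) :
    Matrix.toEuclideanLin Aᵀ = LinearMap.adjoint (Matrix.toEuclideanLin A) := by
  rw [← rTrans]; exact Matrix.toEuclideanLin_conjTranspose_eq_adjoint A

lemma toE_mul (A : Matrix (Fin m) (Fin n) ℝ) (B : Matrix (Fin n) (Fin k) ℝ) :
    Matrix.toEuclideanLin (A * B)
      = (Matrix.toEuclideanLin A).comp (Matrix.toEuclideanLin B) := by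
  apply LinearMap.ext; intro v
  simp [Matrix.toEuclideanLin_apply, Matrix.mulVec_mulVec]

lemma toE_apply_norm_le (A : Matrix (Fin m) (Fin n) ℝ) (v : EuclideanSpace ℝ (Fin n)) :
    ‖Matrix.toEuclideanLin A v‖ ≤ specNorm A * ‖v‖ :=
  (Matrix.toEuclideanLin A).toContinuousLinearMap.le_opNorm v

lemma specNorm_le (A : Matrix (Fin m) (Fin n) ℝ) {c : ℝ} (hc : 0 ≤ c)
    (h : ∀ v : EuclideanSpace ℝ (Fin n), ‖Matrix.toEuclideanLin A v‖ ≤ c * ‖v‖) :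
    specNorm A ≤ c :=
  ContinuousLinearMap.opNorm_le_bound _ hc h

lemma toE_eigen {M : Matrix (Fin n) (Fin n) ℝ} (hM : M.IsHermitian) (i : Fin n) :
    Matrix.toEuclideanLin M (hM.eigenvectorBasis i)
      = hM.eigenvalues i • hM.eigenvectorBasis i := by
  have h := hM.mulVec_eigenvectorBasis i
  simpa [Matrix.toEuclideanLin_apply] using congrArg (WithLp.equiv 2 (Fin n → ℝ)).symm h

lemma inner_toE_dot (M : Matrix (Fin n) (Fin n) ℝ) (a c : EuclideanSpace ℝ (Fin n)) :
    ⟪a, Matrix.toEuclideanLin M c⟫ =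
      dotProduct (star (WithLp.equiv 2 (Fin n → ℝ) a)) (M *ᵥ (WithLp.equiv 2 (Fin n → ℝ) c)) := by
  simp [PiLp.inner_apply, Matrix.toEuclideanLin_apply, dotProduct, RCLike.inner_apply, mul_comm]

lemma psd_inner_nonneg {M : Matrix (Fin n) (Fin n) ℝ} (hM : M.PosSemidef)
    (v : EuclideanSpace ℝ (Fin n)) : 0 ≤ ⟪v, Matrix.toEuclideanLin M v⟫ := by
  rw [inner_toE_dot]
  exact hM.dotProduct_mulVec_nonneg _

lemma herm_sa {M : Matrix (Fin n) (Fin n) ℝ} (hM : M.IsHermitian) :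
    LinearMap.adjoint (Matrix.toEuclideanLin M) = Matrix.toEuclideanLin M := by
  rw [← toE_transpose]
  rw [show Mᵀ = M from rTrans M ▸ hM]

lemma herm_specNorm_le {M : Matrix (Fin n) (Fin n) ℝ} (hM : M.IsHermitian) {c : ℝ} (hc : 0 ≤ c)
    (h : ∀ i, |hM.eigenvalues i| ≤ c) : specNorm M ≤ c := by
  apply specNorm_le _ hc
  intro y
  set f := hM.eigenvectorBasis with hf
  have key : ∀ i, f.repr (Matrix.toEuclideanLin M y) i = hM.eigenvalues i * f.repr y i := by
    intro i
    rw [f.repr_apply_apply, f.repr_apply_apply, ← LinearMap.adjoint_inner_left, herm_sa hM,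
      toE_eigen hM i, real_inner_smul_left]
  have hn1 : ‖Matrix.toEuclideanLin M y‖ ^ 2 = ∑ i, (hM.eigenvalues i * f.repr y i) ^ 2 := by
    rw [← f.repr.norm_map (Matrix.toEuclideanLin M y), EuclideanSpace.norm_eq,
      Real.sq_sqrt (by positivity)]
    exact Finset.sum_congr rfl fun i _ => by rw [key i, Real.norm_eq_abs, sq_abs]
  have hn2 : ‖y‖ ^ 2 = ∑ i, (f.repr y i) ^ 2 := by
    rw [← f.repr.norm_map y, EuclideanSpace.norm_eq, Real.sq_sqrt (by positivity)]
    exact Finset.sum_congr rfl fun i _ => by rw [Real.norm_eq_abs, sq_abs]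
  have hle : ‖Matrix.toEuclideanLin M y‖ ^ 2 ≤ (c * ‖y‖) ^ 2 := by
    rw [hn1, mul_pow, hn2, Finset.mul_sum]
    apply Finset.sum_le_sum
    intro i _
    have h2 : hM.eigenvalues i ^ 2 ≤ c ^ 2 := by
      nlinarith [h i, le_abs_self (hM.eigenvalues i), neg_abs_le (hM.eigenvalues i)]
    rw [mul_pow]
    exact mul_le_mul_of_nonneg_right h2 (sq_nonneg _)
  calc ‖Matrix.toEuclideanLin M y‖ = Real.sqrt (‖Matrix.toEuclideanLin M y‖ ^ 2) :=
        (Real.sqrt_sq (norm_nonneg _)).symm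
    _ ≤ Real.sqrt ((c * ‖y‖) ^ 2) := Real.sqrt_le_sqrt hle
    _ = c * ‖y‖ := Real.sqrt_sq (by positivity)

lemma herm_exists_eig {M : Matrix (Fin n) (Fin n) ℝ} (hn : 0 < n) (hM : M.IsHermitian) :
    ∃ (v : EuclideanSpace ℝ (Fin n)) (lam : ℝ), ‖v‖ = 1 ∧
      Matrix.toEuclideanLin M v = lam • v ∧ |lam| = specNorm M := by
  have hne : (Finset.univ : Finset (Fin n)).Nonempty := ⟨⟨0, hn⟩, Finset.mem_univ _⟩
  obtain ⟨i₀, -, hmax⟩ := Finset.exists_mem_eq_sup' hne (fun i => |hM.eigenvalues i|)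
  set f := hM.eigenvectorBasis
  refine ⟨f i₀, hM.eigenvalues i₀, f.orthonormal.1 i₀, toE_eigen hM i₀, le_antisymm ?_ ?_⟩
  · have := toE_apply_norm_le M (f i₀)
    rw [toE_eigen hM i₀, norm_smul, f.orthonormal.1 i₀, mul_one, Real.norm_eq_abs] at this
    simpa [f.orthonormal.1 i₀] using this
  · apply herm_specNorm_le hM (abs_nonneg _)
    intro i
    rw [← hmax]
    exact Finset.le_sup' (fun i => |hM.eigenvalues i|) (Finset.mem_univ i)

lemma sqrt_perturb (hn : 0 < n) {C D : Matrix (Fin n) (Fin n) ℝ}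
    (hC : C.PosSemidef) (hD : D.PosSemidef) :
    specNorm (C - D) ≤ Real.sqrt (specNorm (C * C - D * D)) := by
  have hM : (C - D).IsHermitian := hC.1.sub hD.1
  obtain ⟨v, lam, hv1, hvec, habs⟩ := herm_exists_eig hn hM
  set qc := ⟪v, Matrix.toEuclideanLin C v⟫ with hqc
  set qd := ⟪v, Matrix.toEuclideanLin D v⟫ with hqd
  have hqc0 : 0 ≤ qc := psd_inner_nonneg hC v
  have hqd0 : 0 ≤ qd := psd_inner_nonneg hD v
  have hvv : ⟪v, v⟫ = 1 := by
    rw [real_inner_self_eq_norm_sq, hv1, one_pow]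
  have hlam : lam = qc - qd := by
    have h1 : ⟪v, Matrix.toEuclideanLin (C - D) v⟫ = lam := by
      rw [hvec, real_inner_smul_right, hvv, mul_one]
    have h2 : Matrix.toEuclideanLin (C - D) v
        = Matrix.toEuclideanLin C v - Matrix.toEuclideanLin D v := by
      rw [map_sub]; rfl
    rw [h2, inner_sub_right] at h1
    rw [← h1]
  have habs_le : |lam| ≤ qc + qd := by
    rw [hlam]
    calc |qc - qd| ≤ |qc| + |qd| := abs_sub _ _
      _ = qc + qd := by rw [abs_of_nonneg hqc0, abs_of_nonneg hqd0]
  have hkey : ⟪v, Matrix.toEuclideanLin (C * C - D * D) v⟫ = lam * (qc + qd) := by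
    have hdecomp : C * C - D * D = C * (C - D) + (C - D) * D := by noncomm_ring
    have hC1 : ⟪v, Matrix.toEuclideanLin (C * (C - D)) v⟫ = lam * qc := by
      rw [toE_mul, LinearMap.comp_apply, hvec, _root_.map_smul, inner_smul_right]
    have hC2 : ⟪v, Matrix.toEuclideanLin ((C - D) * D) v⟫ = lam * qd := by
      rw [toE_mul, LinearMap.comp_apply, ← LinearMap.adjoint_inner_left, herm_sa hM, hvec,
        real_inner_smul_left]
    rw [hdecomp, map_add, LinearMap.add_apply, inner_add_right, hC1, hC2]
    ring
  have hbound : lam ^ 2 ≤ specNorm (C * C - D * D) := by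
    have h1 : |⟪v, Matrix.toEuclideanLin (C * C - D * D) v⟫| ≤ specNorm (C * C - D * D) := by
      calc |⟪v, Matrix.toEuclideanLin (C * C - D * D) v⟫|
          ≤ ‖v‖ * ‖Matrix.toEuclideanLin (C * C - D * D) v‖ := abs_real_inner_le_norm _ _
        _ ≤ ‖v‖ * (specNorm (C * C - D * D) * ‖v‖) :=
            mul_le_mul_of_nonneg_left (toE_apply_norm_le _ _) (norm_nonneg _)
        _ = specNorm (C * C - D * D) := by rw [hv1]; ring
    have h2 : lam ^ 2 ≤ |lam * (qc + qd)| := by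
      rw [abs_mul, abs_of_nonneg (by linarith : (0:ℝ) ≤ qc + qd)]
      calc lam ^ 2 = |lam| * |lam| := by rw [abs_mul_abs_self lam, sq]
        _ ≤ |lam| * (qc + qd) := mul_le_mul_of_nonneg_left habs_le (abs_nonneg _)
    rw [← hkey] at h2
    exact h2.trans h1
  calc specNorm (C - D) = |lam| := habs.symm
    _ = Real.sqrt (lam ^ 2) := (Real.sqrt_sq_eq_abs lam).symm
    _ ≤ Real.sqrt (specNorm (C * C - D * D)) := Real.sqrt_le_sqrt hbound

lemma toE_one : Matrix.toEuclideanLin (1 : Matrix (Fin n) (Fin n) ℝ) = LinearMap.id := by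
  apply LinearMap.ext; intro v
  simp [Matrix.toEuclideanLin_apply]

set_option maxHeartbeats 1000000 in
lemma polar_decomp {N : ℕ} (hnN : n ≤ N) (X : Matrix (Fin n) (Fin N) ℝ) :
    ∃ (B : Matrix (Fin n) (Fin n) ℝ) (V : Matrix (Fin n) (Fin N) ℝ),
      B.PosSemidef ∧ B * B = X * Xᵀ ∧ X = B * V ∧ V * Vᵀ = 1 ∧ specNorm V ≤ 1 := by
  classical
  set P := X * Xᵀ with hPdef
  have hP : P.PosSemidef := by
    have := Matrix.posSemidef_self_mul_conjTranspose X
    rwa [rTrans] at this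
  set hH := hP.1 with hHdef
  set f := hH.eigenvectorBasis with hfdef
  set μ := hH.eigenvalues with hμdef
  have hμ0 : ∀ i, 0 ≤ μ i := fun i => hP.eigenvalues_nonneg i
  set g : Fin n → EuclideanSpace ℝ (Fin N) := fun i => Matrix.toEuclideanLin Xᵀ (f i) with hg
  have hgg : ∀ i j, ⟪g i, g j⟫ = if i = j then μ j else 0 := by
    intro i j
    have h1 : ⟪g i, g j⟫ = ⟪f i, Matrix.toEuclideanLin P (f j)⟫ := by
      rw [hg]
      simp only []
      rw [toE_transpose, LinearMap.adjoint_inner_left, hPdef, toE_mul, LinearMap.comp_apply,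
        toE_transpose]
    rw [h1, toE_eigen hH j, real_inner_smul_right, orthonormal_iff_ite.mp f.orthonormal i j]
    by_cases hij : i = j <;> simp [hij, hμdef]
  set s : Set (Fin N) := {j | ∃ h : (j : ℕ) < n, μ ⟨j, h⟩ ≠ 0} with hsdef
  set w : Fin N → EuclideanSpace ℝ (Fin N) := fun j =>
    if h : (j : ℕ) < n then (Real.sqrt (μ ⟨j, h⟩))⁻¹ • g ⟨j, h⟩ else 0 with hwdef
  have hsqrt_ne : ∀ (i : Fin n), μ i ≠ 0 → Real.sqrt (μ i) ≠ 0 := fun i hi =>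
    Real.sqrt_ne_zero'.mpr (lt_of_le_of_ne (hμ0 i) (Ne.symm hi))
  have horth : Orthonormal ℝ (s.restrict w) := by
    rw [orthonormal_iff_ite]
    rintro ⟨j, hjn, hjμ⟩ ⟨k, hkn, hkμ⟩
    simp only [Set.restrict_apply, hwdef, Set.restrict]
    rw [dif_pos hjn, dif_pos hkn, real_inner_smul_left, real_inner_smul_right,
      hgg ⟨j, hjn⟩ ⟨k, hkn⟩]
    by_cases hjk : (⟨j, hjn⟩ : Fin n) = ⟨k, hkn⟩
    · have hjk2 : j = k := by
        simpa [Fin.ext_iff] using hjk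
      have hsub : (⟨j, ⟨hjn, hjμ⟩⟩ : s) = ⟨k, ⟨hkn, hkμ⟩⟩ := by
        simpa [Subtype.ext_iff] using hjk2
      rw [if_pos hjk, if_pos hsub, hjk, ← mul_assoc, ← mul_inv,
        Real.mul_self_sqrt (hμ0 _), inv_mul_cancel₀ hkμ]
    · have hjk2 : j ≠ k := fun e => hjk (by simpa [Fin.ext_iff] using e)
      have hsub : (⟨j, ⟨hjn, hjμ⟩⟩ : s) ≠ ⟨k, ⟨hkn, hkμ⟩⟩ := by
        simpa [Subtype.ext_iff] using hjk2
      rw [if_neg hjk, if_neg hsub]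
      simp
  have hcard : Module.finrank ℝ (EuclideanSpace ℝ (Fin N)) = Fintype.card (Fin N) := by simp
  obtain ⟨h, hh⟩ := horth.exists_orthonormalBasis_extension_of_card_eq hcard
  set u : EuclideanSpace ℝ (Fin n) →ₗ[ℝ] EuclideanSpace ℝ (Fin N) :=
    f.toBasis.constr ℝ (fun i => h (Fin.castLE hnN i)) with hudef
  set β : EuclideanSpace ℝ (Fin n) →ₗ[ℝ] EuclideanSpace ℝ (Fin n) :=
    f.toBasis.constr ℝ (fun i => Real.sqrt (μ i) • f i) with hβdef
  have huf : ∀ i, u (f i) = h (Fin.castLE hnN i) := by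
    intro i
    have := f.toBasis.constr_basis ℝ (fun i => h (Fin.castLE hnN i)) i
    simpa [hudef] using this
  have hβf : ∀ i, β (f i) = Real.sqrt (μ i) • f i := by
    intro i
    have := f.toBasis.constr_basis ℝ (fun i => Real.sqrt (μ i) • f i) i
    simpa [hβdef] using this
  have hcast_inj : Function.Injective (Fin.castLE hnN) := fun a b e => by
    simpa [Fin.ext_iff] using e
  -- C1 : adjoint u ∘ u = id
  have huu : (LinearMap.adjoint u) ∘ₗ u = LinearMap.id := by
    apply f.toBasis.ext
    intro i
    apply f.repr.injective
    refine PiLp.ext fun j => ?_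
    rw [LinearMap.comp_apply, OrthonormalBasis.coe_toBasis, LinearMap.id_coe, id_eq,
      f.repr_apply_apply, f.repr_apply_apply, LinearMap.adjoint_inner_right, huf, huf,
      orthonormal_iff_ite.mp h.orthonormal, orthonormal_iff_ite.mp f.orthonormal j i]
    by_cases hji : j = i
    · simp [hji]
    · rw [if_neg (fun e => hji (hcast_inj e)), if_neg hji]
  -- C3 : β is self-adjoint
  have hβsa : LinearMap.adjoint β = β := by
    apply f.toBasis.ext
    intro i
    apply f.repr.injective
    refine PiLp.ext fun j => ?_
    rw [OrthonormalBasis.coe_toBasis, f.repr_apply_apply, f.repr_apply_apply,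
      LinearMap.adjoint_inner_right, hβf, hβf, real_inner_smul_left, real_inner_smul_right,
      orthonormal_iff_ite.mp f.orthonormal j i]
    by_cases hji : j = i
    · subst hji; simp
    · simp [hji]
  -- C4 : β ∘ β = toEuclideanLin P
  have hββ : β ∘ₗ β = Matrix.toEuclideanLin P := by
    apply f.toBasis.ext
    intro i
    rw [LinearMap.comp_apply, OrthonormalBasis.coe_toBasis, hβf, _root_.map_smul, hβf, smul_smul,
      Real.mul_self_sqrt (hμ0 i), toE_eigen hH i]
  -- C5 : β is positive
  have hβpos : ∀ a : EuclideanSpace ℝ (Fin n), 0 ≤ ⟪a, β a⟫ := by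
    intro a
    have hrepr : a = ∑ i, f.repr a i • f i := (f.sum_repr a).symm
    have hexp : β a = ∑ i, f.repr a i • (Real.sqrt (μ i) • f i) := by
      conv_lhs => rw [hrepr]
      rw [map_sum]
      exact Finset.sum_congr rfl fun i _ => by rw [_root_.map_smul, hβf]
    rw [hexp, inner_sum]
    apply Finset.sum_nonneg
    intro i _
    rw [real_inner_smul_right, real_inner_smul_right, real_inner_comm, ← f.repr_apply_apply]
    nlinarith [Real.sqrt_nonneg (μ i), mul_self_nonneg (f.repr a i)]
  -- C2 : u ∘ β = toEuclideanLin Xᵀ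
  have hub : u ∘ₗ β = Matrix.toEuclideanLin Xᵀ := by
    apply f.toBasis.ext
    intro i
    rw [LinearMap.comp_apply, OrthonormalBasis.coe_toBasis, hβf, _root_.map_smul, huf]
    show Real.sqrt (μ i) • h (Fin.castLE hnN i) = g i
    by_cases hμi : μ i = 0
    · have hgi : g i = 0 := by
        have := hgg i i
        rw [if_pos rfl, hμi] at this
        exact inner_self_eq_zero.mp this
      rw [hgi, hμi, Real.sqrt_zero, zero_smul]
    · have hlt : ((Fin.castLE hnN i : Fin N) : ℕ) < n := by
        simpa using i.isLt
      have heq : (⟨(Fin.castLE hnN i : Fin N), hlt⟩ : Fin n) = i := by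
        simp [Fin.ext_iff]
      have hmem : (Fin.castLE hnN i : Fin N) ∈ s := by
        refine ⟨hlt, ?_⟩
        rw [heq]; exact hμi
      have hval : h (Fin.castLE hnN i) = (Real.sqrt (μ i))⁻¹ • g i := by
        rw [hh _ hmem, hwdef]
        simp only []
        rw [dif_pos hlt, heq]
      rw [hval, smul_smul, mul_inv_cancel₀ (hsqrt_ne i hμi), one_smul]
  -- assemble
  have hB : Matrix.toEuclideanLin (Matrix.toEuclideanLin.symm β) = β :=
    LinearEquiv.apply_symm_apply _ _
  have hV : Matrix.toEuclideanLin (Matrix.toEuclideanLin.symm (LinearMap.adjoint u))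
      = LinearMap.adjoint u := LinearEquiv.apply_symm_apply _ _
  have huuz : ∀ z, ⟪u z, u z⟫ = ⟪z, z⟫ := by
    intro z
    have h0 := LinearMap.congr_fun huu z
    rw [LinearMap.comp_apply, LinearMap.id_apply] at h0
    calc ⟪u z, u z⟫ = ⟪z, (LinearMap.adjoint u) (u z)⟫ := by
          rw [LinearMap.adjoint_inner_right]
      _ = ⟪z, z⟫ := by rw [h0]
  refine ⟨Matrix.toEuclideanLin.symm β, Matrix.toEuclideanLin.symm (LinearMap.adjoint u),
    ⟨?_, ?_⟩, ?_, ?_, ?_, ?_⟩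
  · show _ = _
    rw [rTrans]
    apply Matrix.toEuclideanLin.injective
    rw [toE_transpose, hB, hβsa]
  · intro x
    have hx := hβpos ((WithLp.equiv 2 (Fin n → ℝ)).symm x)
    rw [← hB, inner_toE_dot] at hx
    simpa [dotProduct, mulVec, Finsupp.sum_fintype, Finset.mul_sum, mul_assoc] using hx
  · apply Matrix.toEuclideanLin.injective
    rw [toE_mul, hB, hββ, hPdef]
  · apply Matrix.toEuclideanLin.injective
    rw [toE_mul, hB, hV]
    have h1 := congrArg LinearMap.adjoint hub
    rw [LinearMap.adjoint_comp, hβsa, toE_transpose, LinearMap.adjoint_adjoint] at h1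
    exact h1.symm
  · apply Matrix.toEuclideanLin.injective
    rw [toE_mul, hV, toE_transpose, hV, LinearMap.adjoint_adjoint, toE_one]
    exact huu
  · apply specNorm_le _ zero_le_one
    intro y
    rw [hV, one_mul]
    set z := LinearMap.adjoint u y with hz
    have h3 : ‖u z‖ = ‖z‖ := by
      have := huuz z
      rw [real_inner_self_eq_norm_sq, real_inner_self_eq_norm_sq] at this
      nlinarith [norm_nonneg (u z), norm_nonneg z]
    have h1 : ‖z‖ ^ 2 ≤ ‖y‖ * ‖z‖ := by
      calc ‖z‖ ^ 2 = ⟪z, z⟫ := (real_inner_self_eq_norm_sq z).symm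
        _ = ⟪y, u z⟫ := by rw [hz, LinearMap.adjoint_inner_left]
        _ ≤ ‖y‖ * ‖u z‖ := real_inner_le_norm y (u z)
        _ = ‖y‖ * ‖z‖ := by rw [h3]
    nlinarith [norm_nonneg z, norm_nonneg y]

lemma specNorm_zero : specNorm (0 : Matrix (Fin m) (Fin n) ℝ) = 0 := by
  unfold specNorm
  rw [map_zero, map_zero, norm_zero]

lemma specNorm_neg (A : Matrix (Fin m) (Fin n) ℝ) : specNorm (-A) = specNorm A := by
  have h : Matrix.toEuclideanLin (-A) = -Matrix.toEuclideanLin A := map_neg _ A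
  unfold specNorm
  rw [h, map_neg, norm_neg]

lemma specNorm_mul_le (A : Matrix (Fin m) (Fin n) ℝ) (B : Matrix (Fin n) (Fin k) ℝ) :
    specNorm (A * B) ≤ specNorm A * specNorm B := by
  have h : (Matrix.toEuclideanLin (A * B)).toContinuousLinearMap
      = ((Matrix.toEuclideanLin A).toContinuousLinearMap).comp
        ((Matrix.toEuclideanLin B).toContinuousLinearMap) := by
    ext v
    simp [toE_mul]
  unfold specNorm
  rw [h]
  exact ContinuousLinearMap.opNorm_comp_le _ _

/-- Lemma (square-root perturbation): if `‖X Xᵀ - Σ‖ ≤ ε₀²/4` with `Σ` psd and `N ≥ n`,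
then there exists `J` with `J Jᵀ = Σ` and `‖J - X‖ ≤ ε₀`. -/
theorem stmt_6 {n N : ℕ} (hnN : n ≤ N) (X : Matrix (Fin n) (Fin N) ℝ)
    (S : Matrix (Fin n) (Fin n) ℝ) (hS : S.PosSemidef)
    (ε₀ : ℝ) (hε₀ : 0 ≤ ε₀)
    (hclose : specNorm (X * Xᵀ - S) ≤ ε₀ ^ 2 / 4) :
    ∃ J : Matrix (Fin n) (Fin N) ℝ, J * Jᵀ = S ∧ specNorm (J - X) ≤ ε₀ := by
  rcases Nat.eq_zero_or_pos n with hn | hn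
  · subst hn
    refine ⟨X, Subsingleton.elim _ _, ?_⟩
    rw [sub_self, specNorm_zero]
    exact hε₀
  · obtain ⟨B, V, hBps, hBB, hXBV, hVV, hVn⟩ := polar_decomp hnN X
    classical
    have hCex : ∃ C : Matrix (Fin n) (Fin n) ℝ, C.PosSemidef ∧ C * C = S := by
      open scoped MatrixOrder in
      exact ⟨CFC.sqrt S, (CFC.sqrt_nonneg S).posSemidef, CFC.sqrt_mul_sqrt_self S hS.nonneg⟩
    obtain ⟨C, hCps, hCC⟩ := hCex
    have hCt : Cᵀ = C := rTrans C ▸ hCps.1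
    refine ⟨C * V, ?_, ?_⟩
    · rw [Matrix.transpose_mul, hCt, ← Matrix.mul_assoc, Matrix.mul_assoc C V Vᵀ, hVV,
        Matrix.mul_one, hCC]
    · have hsub : C * V - X = (C - B) * V := by
        rw [Matrix.sub_mul, ← hXBV]
      rw [hsub]
      have h1 : specNorm ((C - B) * V) ≤ specNorm (C - B) * specNorm V :=
        specNorm_mul_le _ _
      have h2 : specNorm (C - B) ≤ Real.sqrt (specNorm (C * C - B * B)) :=
        sqrt_perturb hn hCps hBps
      have h3 : specNorm (C * C - B * B) = specNorm (X * Xᵀ - S) := by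
        rw [hCC, hBB, ← specNorm_neg (S - X * Xᵀ), neg_sub]
      have h4 : Real.sqrt (specNorm (X * Xᵀ - S)) ≤ ε₀ / 2 := by
        calc Real.sqrt (specNorm (X * Xᵀ - S)) ≤ Real.sqrt (ε₀ ^ 2 / 4) :=
              Real.sqrt_le_sqrt hclose
          _ = Real.sqrt ((ε₀ / 2) ^ 2) := by ring_nf
          _ = ε₀ / 2 := Real.sqrt_sq (by linarith)
      calc specNorm ((C - B) * V) ≤ specNorm (C - B) * specNorm V := h1
        _ ≤ specNorm (C - B) * 1 :=
            mul_le_mul_of_nonneg_left hVn (norm_nonneg _)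
        _ = specNorm (C - B) := mul_one _
        _ ≤ Real.sqrt (specNorm (C * C - B * B)) := h2
        _ = Real.sqrt (specNorm (X * Xᵀ - S)) := by rw [h3]
        _ ≤ ε₀ / 2 := h4
        _ ≤ ε₀ := by linarith
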